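/- Let μ and λ be n-ary algebra structures on V with λ in the closure of the GL(V)-orbit of μ. Then for every (α) = (α₀, α₁, …, αₙ) ∈ ℂ^{n+1}, the dimension of the space Der_{(α)}(μ) of (α)-derivations of μ is at most the dimension of Der_{(α)}(λ). -/

import Mathlib

open Function Submodule

/-! Common framework: `V = ℂ^{n+1}`, `n`-ary multiplications as functions
`(Fin n → V) → V`, the action of `GL(V)` on them, orbits, and the
(n+1)-dimensional n-ary Filippov algebras of Kaygorodov–Volkov, each described
as an alternating `n`-linear map by its values on the increasing tuples of
distinct standard basis vectors (0-indexed: `bt n j` is the tuple omitting `e j`). -/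

/-- The underlying space `V = ℂ^{n+1}`. -/
abbrev nV (n : ℕ) : Type := Fin (n + 1) → ℂ

/-- The `j`-th standard basis vector of `V` (0-indexed). -/
def sb (n : ℕ) (j : Fin (n + 1)) : nV n := Pi.single j 1

/-- The increasing `n`-tuple of standard basis vectors omitting `e j`. -/
def bt (n : ℕ) (j : Fin (n + 1)) : Fin n → nV n := fun k => sb n (j.succAbove k)

/-- The action of `GL(V)` (invertible linear maps) on `n`-ary multiplications:
`(g • μ)(x₁, …, xₙ) = g (μ (g⁻¹ x₁, …, g⁻¹ xₙ))`. -/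
noncomputable def glAct (n : ℕ) (g : nV n ≃ₗ[ℂ] nV n) (μ : (Fin n → nV n) → nV n) :
    (Fin n → nV n) → nV n :=
  fun x => g (μ fun i => g.symm (x i))

/-- The `GL(V)`-orbit of an `n`-ary multiplication. -/
def glOrbit (n : ℕ) (μ : (Fin n → nV n) → nV n) : Set ((Fin n → nV n) → nV n) :=
  {ν | ∃ g : nV n ≃ₗ[ℂ] nV n, ν = glAct n g μ}

/-- The algebra `B`: `[e₂, …, e_{n+1}] = e₁` (0-indexed: the tuple omitting `e 0`
maps to `e 0`), all other increasing basis products zero. -/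
def IsB (n : ℕ) (μ : AlternatingMap ℂ (nV n) (nV n) (Fin n)) : Prop :=
  μ (bt n 0) = sb n 0 ∧ ∀ j : Fin (n + 1), j ≠ 0 → μ (bt n j) = 0

/-- The algebra `C₁`: `[e₂, …, e_{n+1}] = e₁`, `[e₁, e₃, …, e_{n+1}] = e₂`. -/
def IsC1 (n : ℕ) (μ : AlternatingMap ℂ (nV n) (nV n) (Fin n)) : Prop :=
  μ (bt n 0) = sb n 0 ∧ μ (bt n 1) = sb n 1 ∧
    ∀ j : Fin (n + 1), j ≠ 0 → j ≠ 1 → μ (bt n j) = 0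

/-- The algebra `C₂(α)`: `[e₂, …, e_{n+1}] = α e₁ + e₂`, `[e₁, e₃, …, e_{n+1}] = e₂`. -/
def IsC2 (n : ℕ) (α : ℂ) (μ : AlternatingMap ℂ (nV n) (nV n) (Fin n)) : Prop :=
  μ (bt n 0) = α • sb n 0 + sb n 1 ∧ μ (bt n 1) = sb n 1 ∧
    ∀ j : Fin (n + 1), j ≠ 0 → j ≠ 1 → μ (bt n j) = 0

/-- The algebra `C₃`: `[e₁, e₃, …, e_{n+1}] = e₁`, `[e₂, e₃, …, e_{n+1}] = e₂`. -/
def IsC3 (n : ℕ) (μ : AlternatingMap ℂ (nV n) (nV n) (Fin n)) : Prop :=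
  μ (bt n 1) = sb n 0 ∧ μ (bt n 0) = sb n 1 ∧
    ∀ j : Fin (n + 1), j ≠ 0 → j ≠ 1 → μ (bt n j) = 0

/-- The algebra `D_r`: `[e₁, …, e_{i-1}, e_{i+1}, …, e_{n+1}] = e_i` for `1 ≤ i ≤ r`
(0-indexed: the tuple omitting `e j` maps to `e j` for `j < r` and to `0` otherwise). -/
def IsD (n r : ℕ) (μ : AlternatingMap ℂ (nV n) (nV n) (Fin n)) : Prop :=
  ∀ j : Fin (n + 1), ((j : ℕ) < r → μ (bt n j) = sb n j) ∧ (r ≤ (j : ℕ) → μ (bt n j) = 0)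

section Aux

open Module

/-- Linearly independent scalar functions admit evaluation points with invertible matrix. -/
lemma aux_exists_det_ne_zero {X : Type*} : ∀ {k : ℕ} (f : Fin k → X → ℂ),
    LinearIndependent ℂ f → ∃ x : Fin k → X,
      Matrix.det (Matrix.of fun i j => f i (x j)) ≠ 0 := by
  intro k
  induction k with
  | zero =>
    intro f _
    exact ⟨Fin.elim0, by simp⟩
  | succ k ih =>
    intro f hf
    obtain ⟨x, hx⟩ := ih (fun i => f i.castSucc) (hf.comp _ (Fin.castSucc_injective k))
    by_contra h
    push_neg at h
    -- expand determinants along the last column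
    have key : ∀ t : X, ∑ i : Fin (k + 1),
        ((-1) ^ ((i : ℕ) + k) *
          Matrix.det (Matrix.of fun i' j' : Fin k => f (i.succAbove i') (x j'))) * f i t = 0 := by
      intro t
      have h0 := h (Fin.snoc x t)
      have hexp := Matrix.det_succ_column (R := ℂ) (n := k)
        (Matrix.of fun i j => f i ((Fin.snoc x t : Fin (k + 1) → X) j)) (Fin.last k)
      rw [h0] at hexp
      rw [← hexp.symm]
      refine Finset.sum_congr rfl fun i _ => ?_
      have hsub : ((Matrix.of fun i j => f i ((Fin.snoc x t : Fin (k + 1) → X) j)).submatrix i.succAbove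
          (Fin.last k).succAbove) = Matrix.of fun i' j' : Fin k => f (i.succAbove i') (x j') := by
        ext i' j'
        simp [Fin.succAbove_last, Fin.snoc_castSucc]
      rw [hsub]
      simp [Fin.snoc_last, Fin.val_last]
      ring
    have hzero := Fintype.linearIndependent_iff.mp hf
      (fun i => (-1) ^ ((i : ℕ) + k) *
        Matrix.det (Matrix.of fun i' j' : Fin k => f (i.succAbove i') (x j')))
      (by funext t; simpa [Finset.sum_apply, smul_eq_mul] using key t)
    have hlast := hzero (Fin.last k)
    simp only [Fin.val_last, Fin.succAbove_last] at hlast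
    rcases mul_eq_zero.mp hlast with h1 | h1
    · exact pow_ne_zero _ (by norm_num : (-1 : ℂ) ≠ 0) h1
    · exact hx h1

end Aux

section DerMap

open Module

variable (n : ℕ) (α : Fin (n + 1) → ℂ)

/-- The linear map whose kernel is the space of `(α)`-derivations of `σ`. -/
noncomputable def derMap (σ : MultilinearMap ℂ (fun _ : Fin n => nV n) (nV n)) :
    (nV n →ₗ[ℂ] nV n) →ₗ[ℂ] ((Fin n → nV n) → nV n) where
  toFun D := fun x =>
    α 0 • D (σ x) - ∑ i : Fin n, α i.succ • σ (Function.update x i (D (x i)))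
  map_add' D D' := by
    funext x
    simp only [LinearMap.add_apply, map_add, MultilinearMap.map_update_add, smul_add,
      Pi.add_apply, Finset.sum_add_distrib]
    abel
  map_smul' c D := by
    funext x
    simp only [LinearMap.smul_apply, MultilinearMap.map_update_smul, RingHom.id_apply,
      Pi.smul_apply, smul_sub, Finset.smul_sum]
    congr 1
    · rw [smul_comm]
    · exact Finset.sum_congr rfl fun i _ => (smul_comm _ _ _)

lemma derMap_apply (σ : MultilinearMap ℂ (fun _ : Fin n => nV n) (nV n))
    (D : nV n →ₗ[ℂ] nV n) (x : Fin n → nV n) :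
    derMap n α σ D x =
      α 0 • D (σ x) - ∑ i : Fin n, α i.succ • σ (Function.update x i (D (x i))) := rfl

/-- The action of `GL(V)` as a multilinear map. -/
noncomputable def gAct (g : nV n ≃ₗ[ℂ] nV n)
    (μ : MultilinearMap ℂ (fun _ : Fin n => nV n) (nV n)) :
    MultilinearMap ℂ (fun _ : Fin n => nV n) (nV n) :=
  g.toLinearMap.compMultilinearMap (μ.compLinearMap fun _ => g.symm.toLinearMap)

lemma gAct_coe (g : nV n ≃ₗ[ℂ] nV n) (μ : MultilinearMap ℂ (fun _ : Fin n => nV n) (nV n)) :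
    ⇑(gAct n g μ) = glAct n g ⇑μ := rfl

lemma derMap_gAct (g : nV n ≃ₗ[ℂ] nV n) (μ : MultilinearMap ℂ (fun _ : Fin n => nV n) (nV n))
    (D : nV n →ₗ[ℂ] nV n) (x : Fin n → nV n) :
    derMap n α (gAct n g μ) D x =
      g (derMap n α μ ((LinearEquiv.arrowCongr g.symm g.symm) D) (fun l => g.symm (x l))) := by
  simp only [derMap_apply, gAct, map_sub, map_smul, map_sum,
    LinearMap.compMultilinearMap_apply, MultilinearMap.compLinearMap_apply,
    LinearEquiv.arrowCongr_apply, LinearEquiv.coe_coe, LinearEquiv.symm_symm]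
  congr 1
  · rw [g.apply_symm_apply]
  · refine Finset.sum_congr rfl fun i _ => ?_
    have hAB : (fun l => g.symm (Function.update x i (D (x i)) l))
        = Function.update (fun l => g.symm (x l)) i (g.symm (D (g (g.symm (x i))))) := by
      rw [g.apply_symm_apply]
      exact Function.comp_update (g.symm : nV n → nV n) x i (D (x i))
    rw [hAB]

lemma finrank_ker_gAct (g : nV n ≃ₗ[ℂ] nV n)
    (μ : MultilinearMap ℂ (fun _ : Fin n => nV n) (nV n)) :
    finrank ℂ (LinearMap.ker (derMap n α (gAct n g μ)))
      = finrank ℂ (LinearMap.ker (derMap n α μ)) := by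
  set e := LinearEquiv.arrowCongr (M₁ := nV n) (M₁' := nV n) (σ₁₁' := RingHom.id ℂ) (σ₂₂' := RingHom.id ℂ) g.symm g.symm with he
  have hmem : ∀ D, derMap n α (gAct n g μ) D = 0 ↔ derMap n α μ (e D) = 0 := by
    intro D
    constructor
    · intro hD
      funext y
      have h1 := derMap_gAct n α g μ D (fun l => g (y l))
      rw [hD] at h1
      simp only [Pi.zero_apply, LinearEquiv.symm_apply_apply] at h1
      simpa using g.map_eq_zero_iff.mp h1.symm
    · intro hD
      funext x
      rw [derMap_gAct n α g μ D x, hD]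
      simp
  have hmap : (LinearMap.ker (derMap n α (gAct n g μ))).map (e : (nV n →ₗ[ℂ] nV n) →ₗ[ℂ] _)
      = LinearMap.ker (derMap n α μ) := by
    ext D'
    simp only [Submodule.mem_map, LinearMap.mem_ker]
    constructor
    · rintro ⟨D, hD, rfl⟩
      exact (hmem D).mp hD
    · intro hD'
      exact ⟨e.symm D', (hmem _).mpr (by rwa [e.apply_symm_apply]), e.apply_symm_apply D'⟩
  rw [← hmap, LinearEquiv.finrank_map_eq]

/-- uncurrying a vector-valued function of several variables to a scalar function -/
noncomputable def uncur : ((Fin n → nV n) → nV n) →ₗ[ℂ] (((Fin n → nV n) × Fin (n + 1)) → ℂ) where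
  toFun f := fun q => f q.1 q.2
  map_add' _ _ := rfl
  map_smul' _ _ := rfl

lemma uncur_ker : LinearMap.ker (uncur n) = ⊥ := by
  rw [LinearMap.ker_eq_bot']
  intro f hf
  funext x c
  exact congrFun hf (x, c)

end DerMap

/-- If `ν` lies in the closure of the `GL(V)`-orbit of `μ`, then for every
`(α) = (α₀, …, αₙ) ∈ ℂ^{n+1}` the space of `(α)`-derivations of `μ` (the linear maps `D`
with `α₀ D(μ(x₁,…,xₙ)) = Σᵢ αᵢ μ(x₁,…,D(xᵢ),…,xₙ)`) has dimension at most that of the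
space of `(α)`-derivations of `ν`. -/
theorem degeneration_alpha_derivations (n : ℕ) (hn : 2 ≤ n)
    (μ ν : MultilinearMap ℂ (fun _ : Fin n => nV n) (nV n))
    (hdeg : ⇑ν ∈ closure (glOrbit n ⇑μ))
    (α : Fin (n + 1) → ℂ)
    (Derμ Derν : Submodule ℂ (nV n →ₗ[ℂ] nV n))
    (hDerμ : ∀ D : nV n →ₗ[ℂ] nV n, D ∈ Derμ ↔
      ∀ x : Fin n → nV n,
        α 0 • D (μ x) = ∑ i : Fin n, α i.succ • μ (Function.update x i (D (x i))))
    (hDerν : ∀ D : nV n →ₗ[ℂ] nV n, D ∈ Derν ↔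
      ∀ x : Fin n → nV n,
        α 0 • D (ν x) = ∑ i : Fin n, α i.succ • ν (Function.update x i (D (x i)))) :
    Module.finrank ℂ Derμ ≤ Module.finrank ℂ Derν := by
  classical
  have hker : ∀ (σ : MultilinearMap ℂ (fun _ : Fin n => nV n) (nV n))
      (Der : Submodule ℂ (nV n →ₗ[ℂ] nV n)),
      (∀ D : nV n →ₗ[ℂ] nV n, D ∈ Der ↔
        ∀ x : Fin n → nV n,
          α 0 • D (σ x) = ∑ i : Fin n, α i.succ • σ (Function.update x i (D (x i)))) →
      Der = LinearMap.ker (derMap n α σ) := by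
    intro σ Der hDer
    ext D
    rw [hDer, LinearMap.mem_ker]
    constructor
    · intro h
      funext x
      simp only [derMap_apply, Pi.zero_apply, sub_eq_zero]
      exact h x
    · intro h x
      have hx := congrFun h x
      rw [derMap_apply] at hx
      rw [← sub_eq_zero]
      simpa using hx
  rw [hker μ Derμ hDerμ, hker ν Derν hDerν]
  by_contra hlt
  push_neg at hlt
  have hrnν := LinearMap.finrank_range_add_finrank_ker (derMap n α ν)
  have hdm : Module.finrank ℂ (LinearMap.ker (derMap n α μ)) ≤
      Module.finrank ℂ (nV n →ₗ[ℂ] nV n) := Submodule.finrank_le _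
  have h1 : Module.finrank ℂ (nV n →ₗ[ℂ] nV n) -
      Module.finrank ℂ (LinearMap.ker (derMap n α μ)) + 1 ≤
      Module.finrank ℂ (LinearMap.range (derMap n α ν)) := by omega
  obtain ⟨v, hv⟩ := exists_linearIndependent_of_le_finrank h1
  choose D hD using fun i => LinearMap.mem_range.mp (v i).2
  have hwind : LinearIndependent ℂ (fun i => uncur n (derMap n α ν (D i))) := by
    have h2 : LinearIndependent ℂ
        (fun i => ((v i : (Fin n → nV n) → nV n))) :=
      hv.map' (LinearMap.range (derMap n α ν)).subtype (Submodule.ker_subtype _)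
    have h3 : (fun i => derMap n α ν (D i)) =
        (fun i => ((v i : (Fin n → nV n) → nV n))) := by
      funext i; rw [hD i]
    have h4 : LinearIndependent ℂ (fun i => derMap n α ν (D i)) := h3 ▸ h2
    exact h4.map' (uncur n) (uncur_ker n)
  obtain ⟨p, hdet⟩ := aux_exists_det_ne_zero _ hwind
  set G : ((Fin n → nV n) → nV n) → ℂ := fun σ =>
    Matrix.det (Matrix.of fun i j =>
      (α 0 • D i (σ ((p j).1)) - ∑ l : Fin n,
        α l.succ • σ (Function.update ((p j).1) l (D i ((p j).1 l)))) ((p j).2)) with hG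
  have hGν : G ⇑ν ≠ 0 := hdet
  have hGcont : Continuous G := by
    apply Continuous.matrix_det
    apply continuous_matrix
    intro i j
    simp only [Matrix.of_apply, Pi.sub_apply, Pi.smul_apply, Finset.sum_apply, smul_eq_mul]
    apply Continuous.sub
    · exact continuous_const.mul ((continuous_apply ((p j).2)).comp
        ((D i).continuous_of_finiteDimensional.comp (continuous_apply ((p j).1))))
    · apply continuous_finset_sum
      intro l _
      exact continuous_const.mul ((continuous_apply ((p j).2)).comp
        (continuous_apply (Function.update ((p j).1) l (D i ((p j).1 l)))))
  have hopen : IsOpen {σ : (Fin n → nV n) → nV n | G σ ≠ 0} :=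
    isOpen_compl_singleton.preimage hGcont
  obtain ⟨τ, hτG, hτorb⟩ := mem_closure_iff.mp hdeg _ hopen hGν
  obtain ⟨g, hτg⟩ := hτorb
  have hGg : G ⇑(gAct n g μ) ≠ 0 := by
    rw [gAct_coe, ← hτg]; exact hτG
  have hMdet : (Matrix.of fun i j =>
      (derMap n α (gAct n g μ) (D i) ((p j).1)) ((p j).2)).det ≠ 0 := hGg
  have hind : LinearIndependent ℂ (fun i => derMap n α (gAct n g μ) (D i)) := by
    rw [Fintype.linearIndependent_iff]
    intro c hc i
    by_contra hci
    have hcvec : Matrix.vecMul c (Matrix.of fun i j =>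
        (derMap n α (gAct n g μ) (D i) ((p j).1)) ((p j).2)) = 0 := by
      funext j
      have hcx := congrFun (congrFun hc ((p j).1)) ((p j).2)
      simpa [Matrix.vecMul, dotProduct, Finset.sum_apply, Pi.smul_apply,
        smul_eq_mul] using hcx
    have hcne : c ≠ 0 := fun h0 => hci (congrFun h0 i)
    exact hMdet (Matrix.exists_vecMul_eq_zero_iff.mp ⟨c, hcne, hcvec⟩)
  have hcard : Module.finrank ℂ (nV n →ₗ[ℂ] nV n) -
      Module.finrank ℂ (LinearMap.ker (derMap n α μ)) + 1 ≤
      Module.finrank ℂ (LinearMap.range (derMap n α (gAct n g μ))) := by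
    have h5 : LinearIndependent ℂ (fun i =>
        (⟨derMap n α (gAct n g μ) (D i), LinearMap.mem_range_self _ _⟩ :
          LinearMap.range (derMap n α (gAct n g μ)))) :=
      LinearIndependent.of_comp (LinearMap.range (derMap n α (gAct n g μ))).subtype hind
    simpa using h5.fintype_card_le_finrank
  have hrng := LinearMap.finrank_range_add_finrank_ker (derMap n α (gAct n g μ))
  have hkg := finrank_ker_gAct n α g μ
  omega
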